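/- Collapse of the wave function for general nondestructive measurement: let ψ_i and ψ_j be orthonormal vectors in H whose rank-one projections P_i := |ψ_i⟩⟨ψ_i| and P_j := |ψ_j⟩⟨ψ_j| satisfy R(P_i) = P_i and R(P_j) = P_j (nondestructiveness). Let Q ∈ B(K) be an orthogonal projection and E ∈ B(H) an orthogonal projection with E ψ_i = ψ_i and E ψ_j = 0, and suppose ‖T(1 ⊗ Q) − E‖ ≤ δ with δ ∈ [0, 1/2]. Then for every orthogonal projection P ∈ B(H), |⟨ψ_i, R(P) ψ_j⟩| ≤ √(δ(1 − δ)). -/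

import Mathlib

open ContinuousLinearMap

/-! The Hilbert tensor product `H ⊗ K` is modelled by a Hilbert space `L` together
with two commuting unital ⋆-homomorphisms `ι₁ : B(H) → B(L)` and `ι₂ : B(K) → B(L)`
(playing the roles of `X ↦ X ⊗ 1` and `Y ↦ 1 ⊗ Y`). Given an isometry
`V : H → L`, the quantum operation is `T(X) = V† X V` and its restriction to the
system is `R(P) = T(ι₁ P)`. -/

variable {H K L : Type*}
  [NormedAddCommGroup H] [InnerProductSpace ℂ H] [CompleteSpace H]
  [NormedAddCommGroup K] [InnerProductSpace ℂ K] [CompleteSpace K]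
  [NormedAddCommGroup L] [InnerProductSpace ℂ L] [CompleteSpace L]

/-- The quantum operation `T(X) = V† X V` in Stinespring form. -/
noncomputable def qop (V : H →L[ℂ] L) (X : L →L[ℂ] L) : H →L[ℂ] H :=
  adjoint V ∘L X ∘L V

open scoped InnerProductSpace

section Aux
variable {E : Type*} [NormedAddCommGroup E] [InnerProductSpace ℂ E] [CompleteSpace E]

lemma aux_inner_proj {A : E →L[ℂ] E} (h1 : IsIdempotentElem A) (h2 : IsSelfAdjoint A)
    (x : E) : ⟪x, A x⟫_ℂ = (‖A x‖ : ℂ) ^ 2 := by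
  have hA : adjoint A = A := isSelfAdjoint_iff'.mp h2
  have hAA : A (A x) = A x := by rw [← ContinuousLinearMap.mul_apply, h1]
  calc ⟪x, A x⟫_ℂ = ⟪x, A (A x)⟫_ℂ := by rw [hAA]
    _ = ⟪adjoint A x, A x⟫_ℂ := (ContinuousLinearMap.adjoint_inner_left A (A x) x).symm
    _ = ⟪A x, A x⟫_ℂ := by rw [hA]
    _ = (‖A x‖ : ℂ) ^ 2 := inner_self_eq_norm_sq_to_K _

lemma aux_pyth {A : E →L[ℂ] E} (h1 : IsIdempotentElem A) (h2 : IsSelfAdjoint A)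
    (x : E) : ‖A x‖ ^ 2 + ‖x - A x‖ ^ 2 = ‖x‖ ^ 2 := by
  have hA : adjoint A = A := isSelfAdjoint_iff'.mp h2
  have hAA : A (A x) = A x := by rw [← ContinuousLinearMap.mul_apply, h1]
  have hz : A (x - A x) = 0 := by rw [map_sub, hAA, sub_self]
  have horth : ⟪A x, x - A x⟫_ℂ = 0 := by
    have h := ContinuousLinearMap.adjoint_inner_left A (x - A x) x
    rw [hA] at h
    rw [h, hz, inner_zero_right]
  have hx : A x + (x - A x) = x := by abel
  have hns := norm_add_sq (𝕜 := ℂ) (A x) (x - A x)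
  rw [hx, horth] at hns
  simp at hns
  linarith

lemma aux_fix {A : E →L[ℂ] E} (h1 : IsIdempotentElem A) (h2 : IsSelfAdjoint A)
    {x : E} (h : ⟪x, A x⟫_ℂ = (‖x‖ : ℂ) ^ 2) : A x = x := by
  have h' := aux_inner_proj h1 h2 x
  rw [h] at h'
  have hn : ‖x‖ ^ 2 = ‖A x‖ ^ 2 := by exact_mod_cast h'
  have hp := aux_pyth h1 h2 x
  have h0 : ‖x - A x‖ ^ 2 = 0 := by linarith
  have : x - A x = 0 := by
    rw [pow_eq_zero_iff two_ne_zero] at h0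
    exact norm_eq_zero.mp h0
  rw [sub_eq_zero] at this
  exact this.symm

lemma aux_kill {A : E →L[ℂ] E} (h1 : IsIdempotentElem A) (h2 : IsSelfAdjoint A)
    {x : E} (h : ⟪x, A x⟫_ℂ = 0) : A x = 0 := by
  have h' := aux_inner_proj h1 h2 x
  rw [h] at h'
  have h0 : (‖A x‖ : ℂ) ^ 2 = 0 := h'.symm
  have : ‖A x‖ = 0 := by
    have := pow_eq_zero_iff (n := 2) two_ne_zero |>.mp h0
    exact_mod_cast this
  exact norm_eq_zero.mp this

end Aux

lemma aux_half {α β γ ε c : ℝ} (hc : 0 ≤ c) (hα : 0 ≤ α) (hβ : 0 ≤ β) (hγ : 0 ≤ γ)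
    (hε : 0 ≤ ε) (h1 : c ≤ α * β) (h2 : c ≤ γ * ε)
    (hαγ : α ^ 2 + γ ^ 2 = 1) (hβε : β ^ 2 + ε ^ 2 = 1) : c ≤ 1 / 2 := by
  have hαγ2 : α * γ ≤ 1 / 2 := by nlinarith [sq_nonneg (α - γ)]
  have hβε2 : β * ε ≤ 1 / 2 := by nlinarith [sq_nonneg (β - ε)]
  have hcsq : c ^ 2 ≤ (α * β) * (γ * ε) := by
    have := mul_le_mul h1 h2 hc (mul_nonneg hα hβ)
    nlinarith [this]
  have h14 : c ^ 2 ≤ 1 / 4 := by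
    nlinarith [mul_nonneg hα hγ, mul_nonneg hβ hε, mul_nonneg (mul_nonneg hα hγ) (mul_nonneg hβ hε)]
  nlinarith [sq_nonneg (c - 1 / 2)]

lemma aux_num {a b u v δ : ℝ} (ha : 0 ≤ a) (hb : 0 ≤ b) (hu : 0 ≤ u) (hv : 0 ≤ v)
    (h1 : a ^ 2 + u ^ 2 = 1) (h2 : b ^ 2 + v ^ 2 = 1) (h3 : u ^ 2 ≤ δ) (h4 : b ^ 2 ≤ δ)
    (h5 : δ ≤ 1 / 2) : a * b + u * v ≤ 2 * Real.sqrt (δ * (1 - δ)) := by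
  have hδ0 : 0 ≤ δ := le_trans (sq_nonneg b) h4
  have hprod : 0 ≤ δ * (1 - δ) := mul_nonneg hδ0 (by linarith)
  set r := Real.sqrt (δ * (1 - δ)) with hr
  have hr0 : 0 ≤ r := Real.sqrt_nonneg _
  have hr2 : r ^ 2 = δ * (1 - δ) := Real.sq_sqrt hprod
  have key : (a * b + u * v) ^ 2 ≤ 4 * r ^ 2 := by
    nlinarith [sq_nonneg (a*b - u*v), mul_nonneg (sub_nonneg.2 h3) (by nlinarith : (0:ℝ) ≤ 1 - 2*b^2),
      mul_nonneg (sub_nonneg.2 h4) (by linarith : (0:ℝ) ≤ 1 - 2*δ), sq_nonneg u, sq_nonneg b]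
  nlinarith [key, hr0, mul_nonneg ha hb, mul_nonneg hu hv,
    mul_nonneg (add_nonneg (mul_nonneg ha hb) (mul_nonneg hu hv)) hr0]



set_option maxHeartbeats 1000000 in
/-- Collapse of the wave function for general nondestructive measurement: if the
rank-one projections `Pᵢ = |ψᵢ⟩⟨ψᵢ|` and `Pⱼ = |ψⱼ⟩⟨ψⱼ|` onto orthonormal vectors
`ψᵢ, ψⱼ` are fixed by `R`, `Q` is a pointer projection, `E` a projection with
`E ψᵢ = ψᵢ`, `E ψⱼ = 0`, and `‖T(1 ⊗ Q) − E‖ ≤ δ ≤ 1/2`, then every orthogonal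
projection `P` satisfies `|⟨ψᵢ, R(P) ψⱼ⟩| ≤ √(δ(1 − δ))`. -/
theorem collapse_general_nondestructive
    (ι₁ : (H →L[ℂ] H) →⋆ₐ[ℂ] (L →L[ℂ] L)) (ι₂ : (K →L[ℂ] K) →⋆ₐ[ℂ] (L →L[ℂ] L))
    (hcomm : ∀ X Y, ι₁ X * ι₂ Y = ι₂ Y * ι₁ X)
    (V : H →L[ℂ] L) (hV : adjoint V ∘L V = 1)
    (ψi ψj : H) (hψi : ‖ψi‖ = 1) (hψj : ‖ψj‖ = 1) (hperp : ⟪ψi, ψj⟫_ℂ = 0)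
    (hfixi : qop V (ι₁ ((innerSL ℂ ψi).smulRight ψi)) = (innerSL ℂ ψi).smulRight ψi)
    (hfixj : qop V (ι₁ ((innerSL ℂ ψj).smulRight ψj)) = (innerSL ℂ ψj).smulRight ψj)
    (Q : K →L[ℂ] K) (hQproj : IsIdempotentElem Q) (hQsa : IsSelfAdjoint Q)
    (E : H →L[ℂ] H) (hEproj : IsIdempotentElem E) (hEsa : IsSelfAdjoint E)
    (hEi : E ψi = ψi) (hEj : E ψj = 0)
    (δ : ℝ) (hδ : δ ∈ Set.Icc (0 : ℝ) (1 / 2))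
    (hinfid : ‖qop V (ι₂ Q) - E‖ ≤ δ) :
    ∀ P : H →L[ℂ] H, IsIdempotentElem P → IsSelfAdjoint P →
      ‖⟪ψi, qop V (ι₁ P) ψj⟫_ℂ‖ ≤ Real.sqrt (δ * (1 - δ)) := by
  intro P hPproj hPsa
  obtain ⟨hδ0, hδ1⟩ := hδ
  set Pi := (innerSL ℂ ψi).smulRight ψi with hPidef
  set Pj := (innerSL ℂ ψj).smulRight ψj with hPjdef
  have hii : ⟪ψi, ψi⟫_ℂ = 1 := by
    rw [inner_self_eq_norm_sq_to_K, hψi]; norm_num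
  have hjj : ⟪ψj, ψj⟫_ℂ = 1 := by
    rw [inner_self_eq_norm_sq_to_K, hψj]; norm_num
  have hperp' : ⟪ψj, ψi⟫_ℂ = 0 := by rw [← inner_conj_symm, hperp, map_zero]
  have hPiapp : ∀ x, Pi x = ⟪ψi, x⟫_ℂ • ψi := fun x => rfl
  have hPjapp : ∀ x, Pj x = ⟪ψj, x⟫_ℂ • ψj := fun x => rfl
  -- Pi, Pj are projections
  have hPi_idem : IsIdempotentElem Pi := by
    show Pi * Pi = Pi
    ext x
    simp [ContinuousLinearMap.mul_apply, hPiapp, inner_smul_right, hii, smul_smul, hψi]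
  have hPj_idem : IsIdempotentElem Pj := by
    show Pj * Pj = Pj
    ext x
    simp [ContinuousLinearMap.mul_apply, hPjapp, inner_smul_right, hjj, smul_smul, hψj]
  have hPi_sa : IsSelfAdjoint Pi := by
    rw [ContinuousLinearMap.isSelfAdjoint_iff']
    symm
    rw [ContinuousLinearMap.eq_adjoint_iff]
    intro x y
    simp [hPiapp, inner_smul_left, inner_smul_right, inner_conj_symm, mul_comm]
  have hPj_sa : IsSelfAdjoint Pj := by
    rw [ContinuousLinearMap.isSelfAdjoint_iff']
    symm
    rw [ContinuousLinearMap.eq_adjoint_iff]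
    intro x y
    simp [hPjapp, inner_smul_left, inner_smul_right, inner_conj_symm, mul_comm]
  -- the isometry
  have hqop : ∀ (X : L →L[ℂ] L) (x y : H), ⟪x, (qop V X) y⟫_ℂ = ⟪V x, X (V y)⟫_ℂ := by
    intro X x y
    simp only [qop, ContinuousLinearMap.comp_apply]
    exact ContinuousLinearMap.adjoint_inner_right V x (X (V y))
  have hVin : ∀ x y : H, ⟪V x, V y⟫_ℂ = ⟪x, y⟫_ℂ := by
    intro x y
    have h1 : adjoint V (V y) = y := by
      rw [← ContinuousLinearMap.comp_apply, hV]; rfl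
    calc ⟪V x, V y⟫_ℂ = ⟪x, adjoint V (V y)⟫_ℂ :=
          (ContinuousLinearMap.adjoint_inner_right V x (V y)).symm
      _ = ⟪x, y⟫_ℂ := by rw [h1]
  set φi := V ψi with hφidef
  set φj := V ψj with hφjdef
  have hφi : ‖φi‖ = 1 := by
    have h2 : ‖V ψi‖ ^ 2 = 1 := by
      rw [← inner_self_eq_norm_sq (𝕜 := ℂ), hVin, hii]
      simp
    rw [hφidef]
    nlinarith [norm_nonneg (V ψi)]
  have hφj : ‖φj‖ = 1 := by
    have h2 : ‖V ψj‖ ^ 2 = 1 := by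
      rw [← inner_self_eq_norm_sq (𝕜 := ℂ), hVin, hjj]
      simp
    rw [hφjdef]
    nlinarith [norm_nonneg (V ψj)]
  -- transfer of projections through ι₁, ι₂
  have hmapProj1 : ∀ (X : H →L[ℂ] H), IsIdempotentElem X → IsIdempotentElem (ι₁ X) := by
    intro X hX
    show ι₁ X * ι₁ X = ι₁ X
    rw [← map_mul, hX]
  have hmapSa1 : ∀ (X : H →L[ℂ] H), IsSelfAdjoint X → IsSelfAdjoint (ι₁ X) := by
    intro X hX
    show star (ι₁ X) = ι₁ X
    rw [← map_star, hX.star_eq]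
  have hAi_idem := hmapProj1 Pi hPi_idem
  have hAi_sa := hmapSa1 Pi hPi_sa
  have hAj_idem := hmapProj1 Pj hPj_idem
  have hAj_sa := hmapSa1 Pj hPj_sa
  -- fixed-vector facts
  have hAiφi : (ι₁ Pi) φi = φi := by
    apply aux_fix hAi_idem hAi_sa
    have h := hqop (ι₁ Pi) ψi ψi
    rw [hfixi] at h
    rw [← h]
    simp [hPiapp, inner_smul_right, hii, hφi, hψi]
  have hAiφj : (ι₁ Pi) φj = 0 := by
    apply aux_kill hAi_idem hAi_sa
    have h := hqop (ι₁ Pi) ψj ψj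
    rw [hfixi] at h
    rw [← h]
    simp [hPiapp, inner_smul_right, hperp]
  have hAjφj : (ι₁ Pj) φj = φj := by
    apply aux_fix hAj_idem hAj_sa
    have h := hqop (ι₁ Pj) ψj ψj
    rw [hfixj] at h
    rw [← h]
    simp [hPjapp, inner_smul_right, hjj, hφj, hψj]
  -- the factorisation through the rank-one operator S
  set c := ⟪ψi, P ψj⟫_ℂ with hcdef
  set S := (innerSL ℂ ψj).smulRight ψi with hSdef
  have hSapp : ∀ x, S x = ⟪ψj, x⟫_ℂ • ψi := fun x => rfl
  have hfact : Pi * P * Pj = c • S := by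
    ext x
    simp only [ContinuousLinearMap.mul_apply, ContinuousLinearMap.smul_apply, hPiapp, hPjapp,
      hSapp, map_smul, inner_smul_right, smul_smul]
    ring_nf
    rfl
  have hsplit : ⟪ψi, qop V (ι₁ P) ψj⟫_ℂ = c * ⟪φi, (ι₁ S) φj⟫_ℂ := by
    rw [hqop]
    have hAi_adj : adjoint (ι₁ Pi) = ι₁ Pi := isSelfAdjoint_iff'.mp hAi_sa
    have h1 : ⟪φi, (ι₁ P) φj⟫_ℂ = ⟪(ι₁ Pi) φi, (ι₁ P) ((ι₁ Pj) φj)⟫_ℂ := by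
      rw [hAiφi, hAjφj]
    have h2 : ⟪(ι₁ Pi) φi, (ι₁ P) ((ι₁ Pj) φj)⟫_ℂ
        = ⟪φi, (ι₁ Pi) ((ι₁ P) ((ι₁ Pj) φj))⟫_ℂ := by
      have := ContinuousLinearMap.adjoint_inner_left (ι₁ Pi) ((ι₁ P) ((ι₁ Pj) φj)) φi
      rw [hAi_adj] at this
      exact this
    have h3 : (ι₁ Pi) ((ι₁ P) ((ι₁ Pj) φj)) = (ι₁ (Pi * P * Pj)) φj := by
      simp [map_mul, ContinuousLinearMap.mul_apply]
    rw [h1, h2, h3, hfact, map_smul, ContinuousLinearMap.smul_apply, inner_smul_right]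
  -- norm of ι₁ S
  have hSnorm : ‖S‖ ≤ 1 := by
    apply ContinuousLinearMap.opNorm_le_bound _ zero_le_one
    intro x
    rw [hSapp x, norm_smul, hψi, mul_one, one_mul]
    calc ‖⟪ψj, x⟫_ℂ‖ ≤ ‖ψj‖ * ‖x‖ := norm_inner_le_norm _ _
      _ = ‖x‖ := by rw [hψj, one_mul]
  have hιS : ‖(ι₁ S : L →L[ℂ] L)‖ ≤ 1 :=
    le_trans (NonUnitalStarAlgHom.norm_apply_le ι₁ S) hSnorm
  -- the pointer projection on L
  set Qt := ι₂ Q with hQtdef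
  have hQt_idem : IsIdempotentElem Qt := by
    show Qt * Qt = Qt
    rw [hQtdef, ← map_mul, hQproj]
  have hQt_sa : IsSelfAdjoint Qt := by
    show star Qt = Qt
    rw [hQtdef, ← map_star, hQsa.star_eq]
  have hQt'_idem : IsIdempotentElem (1 - Qt) := hQt_idem.one_sub
  have hQt'_sa : IsSelfAdjoint (1 - Qt) := ((IsSelfAdjoint.one _).sub hQt_sa)
  have hcommS : Qt * ι₁ S = ι₁ S * Qt := (hcomm S Q).symm
  have hQQ : Qt * Qt = Qt := hQt_idem
  have hdec : Qt * ι₁ S * Qt + (1 - Qt) * ι₁ S * (1 - Qt) = ι₁ S := by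
    have e1 : Qt * ι₁ S * Qt = ι₁ S * Qt := by rw [hcommS, mul_assoc, hQQ]
    have e2 : (1 - Qt) * ι₁ S * (1 - Qt) = ι₁ S - ι₁ S * Qt := by
      rw [sub_mul, one_mul, hcommS, sub_mul, mul_sub, mul_sub, mul_one, mul_one,
        mul_assoc, hQQ]
      abel
    rw [e1, e2]
    abel
  -- split the matrix element of ι₁ S
  have hQt_adj : adjoint Qt = Qt := isSelfAdjoint_iff'.mp hQt_sa
  have hQt'_adj : adjoint (1 - Qt) = 1 - Qt := isSelfAdjoint_iff'.mp hQt'_sa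
  have hm : ⟪φi, (ι₁ S) φj⟫_ℂ
      = ⟪Qt φi, (ι₁ S) (Qt φj)⟫_ℂ + ⟪(1 - Qt) φi, (ι₁ S) ((1 - Qt) φj)⟫_ℂ := by
    have e1 : ⟪φi, (Qt * ι₁ S * Qt) φj⟫_ℂ = ⟪Qt φi, (ι₁ S) (Qt φj)⟫_ℂ := by
      have h := ContinuousLinearMap.adjoint_inner_left Qt ((ι₁ S) (Qt φj)) φi
      rw [hQt_adj] at h
      rw [ContinuousLinearMap.mul_apply, ContinuousLinearMap.mul_apply]
      exact h.symm
    have e2 : ⟪φi, ((1 - Qt) * ι₁ S * (1 - Qt)) φj⟫_ℂ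
        = ⟪(1 - Qt) φi, (ι₁ S) ((1 - Qt) φj)⟫_ℂ := by
      have h := ContinuousLinearMap.adjoint_inner_left (1 - Qt) ((ι₁ S) ((1 - Qt) φj)) φi
      rw [hQt'_adj] at h
      rw [ContinuousLinearMap.mul_apply, ContinuousLinearMap.mul_apply]
      exact h.symm
    conv_lhs => rw [← hdec]
    rw [ContinuousLinearMap.add_apply, inner_add_right, e1, e2]
  -- bounds on the two pieces
  have hbound : ∀ x y : L, ‖⟪x, (ι₁ S) y⟫_ℂ‖ ≤ ‖x‖ * ‖y‖ := by
    intro x y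
    calc ‖⟪x, (ι₁ S) y⟫_ℂ‖ ≤ ‖x‖ * ‖(ι₁ S) y‖ := norm_inner_le_norm _ _
      _ ≤ ‖x‖ * ‖y‖ := by
          have h1 := ContinuousLinearMap.le_opNorm (ι₁ S) y
          have h2 : ‖(ι₁ S) y‖ ≤ ‖y‖ := by
            calc ‖(ι₁ S) y‖ ≤ ‖(ι₁ S : L →L[ℂ] L)‖ * ‖y‖ := h1
              _ ≤ 1 * ‖y‖ := by
                  exact mul_le_mul_of_nonneg_right hιS (norm_nonneg _)
              _ = ‖y‖ := one_mul _
          exact mul_le_mul_of_nonneg_left h2 (norm_nonneg _)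
  -- quantitative facts about Qt on φi, φj
  set a := ‖Qt φi‖ with hadef
  set b := ‖Qt φj‖ with hbdef
  set u := ‖φi - Qt φi‖ with hudef
  set v := ‖φj - Qt φj‖ with hvdef
  have hQt'app : ∀ x : L, (1 - Qt) x = x - Qt x := by
    intro x; simp [ContinuousLinearMap.sub_apply]
  have hpi : a ^ 2 + u ^ 2 = 1 := by
    have := aux_pyth hQt_idem hQt_sa φi
    rw [hφi] at this
    simpa using this
  have hpj : b ^ 2 + v ^ 2 = 1 := by
    have := aux_pyth hQt_idem hQt_sa φj
    rw [hφj] at this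
    simpa using this
  -- infidelity bounds
  have hDbound : ∀ x : H, ‖x‖ = 1 → ‖⟪x, (qop V (ι₂ Q) - E) x⟫_ℂ‖ ≤ δ := by
    intro x hx
    calc ‖⟪x, (qop V (ι₂ Q) - E) x⟫_ℂ‖ ≤ ‖x‖ * ‖(qop V (ι₂ Q) - E) x‖ :=
          norm_inner_le_norm _ _
      _ ≤ ‖x‖ * (‖qop V (ι₂ Q) - E‖ * ‖x‖) := by
          exact mul_le_mul_of_nonneg_left (ContinuousLinearMap.le_opNorm _ _) (norm_nonneg _)
      _ = ‖qop V (ι₂ Q) - E‖ := by rw [hx]; ring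
      _ ≤ δ := hinfid
  have hvali : ⟪ψi, (qop V (ι₂ Q) - E) ψi⟫_ℂ = ((a ^ 2 - 1 : ℝ) : ℂ) := by
    rw [ContinuousLinearMap.sub_apply, inner_sub_right, hqop, hEi, hii]
    rw [← hQtdef, ← hφidef, aux_inner_proj hQt_idem hQt_sa, ← hadef]
    push_cast
    ring
  have hvalj : ⟪ψj, (qop V (ι₂ Q) - E) ψj⟫_ℂ = ((b ^ 2 : ℝ) : ℂ) := by
    rw [ContinuousLinearMap.sub_apply, inner_sub_right, hqop, hEj, inner_zero_right]
    rw [← hQtdef, ← hφjdef, aux_inner_proj hQt_idem hQt_sa, ← hbdef]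
    push_cast
    ring
  have hu2 : u ^ 2 ≤ δ := by
    have h1 := hDbound ψi hψi
    rw [hvali, Complex.norm_real] at h1
    have h2 : |a ^ 2 - 1| ≤ δ := h1
    rw [abs_le] at h2
    linarith [h2.1]
  have hb2 : b ^ 2 ≤ δ := by
    have h1 := hDbound ψj hψj
    rw [hvalj, Complex.norm_real] at h1
    have h2 : |b ^ 2| ≤ δ := h1
    rw [abs_le] at h2
    linarith [h2.1, sq_nonneg b]
  -- |c| ≤ 1/2
  have hP_adj : adjoint P = P := isSelfAdjoint_iff'.mp hPsa
  have hPP : P (P ψj) = P ψj := by rw [← ContinuousLinearMap.mul_apply, hPproj]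
  have hcP : c = ⟪P ψi, P ψj⟫_ℂ := by
    have h := ContinuousLinearMap.adjoint_inner_left P (P ψj) ψi
    rw [hP_adj, hPP] at h
    exact h.symm
  have hP'_idem : IsIdempotentElem (1 - P) := hPproj.one_sub
  have hP'_sa : IsSelfAdjoint (1 - P) := ((IsSelfAdjoint.one _).sub hPsa)
  have hP'_adj : adjoint (1 - P) = 1 - P := isSelfAdjoint_iff'.mp hP'_sa
  have hP'P' : (1 - P) ((1 - P) ψj) = (1 - P) ψj := by
    rw [← ContinuousLinearMap.mul_apply, hP'_idem]
  have hcP' : -c = ⟪(1 - P) ψi, (1 - P) ψj⟫_ℂ := by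
    have h := ContinuousLinearMap.adjoint_inner_left (1 - P) ((1 - P) ψj) ψi
    rw [hP'_adj, hP'P'] at h
    rw [h, ContinuousLinearMap.sub_apply, inner_sub_right, ContinuousLinearMap.one_apply,
      hperp, ← hcdef]
    ring
  have hsubP : ∀ x : H, (1 - P) x = x - P x := by
    intro x; simp [ContinuousLinearMap.sub_apply]
  have hc1 : ‖c‖ ≤ ‖P ψi‖ * ‖P ψj‖ := by rw [hcP]; exact norm_inner_le_norm _ _
  have hc2 : ‖c‖ ≤ ‖ψi - P ψi‖ * ‖ψj - P ψj‖ := by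
    have h1 : ‖c‖ = ‖-c‖ := (norm_neg c).symm
    rw [h1, hcP', hsubP, hsubP]
    exact norm_inner_le_norm _ _
  have hpyi := aux_pyth hPproj hPsa ψi
  have hpyj := aux_pyth hPproj hPsa ψj
  rw [hψi] at hpyi
  rw [hψj] at hpyj
  norm_num at hpyi hpyj
  have hchalf : ‖c‖ ≤ 1 / 2 :=
    aux_half (norm_nonneg c) (norm_nonneg _) (norm_nonneg _) (norm_nonneg _) (norm_nonneg _)
      hc1 hc2 hpyi hpyj
  have hmbound : ‖⟪φi, (ι₁ S) φj⟫_ℂ‖ ≤ 2 * Real.sqrt (δ * (1 - δ)) := by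
    have h1 : ‖⟪φi, (ι₁ S) φj⟫_ℂ‖ ≤ a * b + u * v := by
      rw [hm]
      calc ‖⟪Qt φi, (ι₁ S) (Qt φj)⟫_ℂ + ⟪(1 - Qt) φi, (ι₁ S) ((1 - Qt) φj)⟫_ℂ‖
          ≤ ‖⟪Qt φi, (ι₁ S) (Qt φj)⟫_ℂ‖ + ‖⟪(1 - Qt) φi, (ι₁ S) ((1 - Qt) φj)⟫_ℂ‖ :=
            norm_add_le _ _
        _ ≤ a * b + u * v := by
            simp only [hQt'app]
            have t1 := hbound (Qt φi) (Qt φj)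
            have t2 := hbound (φi - Qt φi) (φj - Qt φj)
            exact add_le_add t1 t2
    exact le_trans h1 (aux_num (norm_nonneg _) (norm_nonneg _) (norm_nonneg _) (norm_nonneg _)
      hpi hpj hu2 hb2 hδ1)
  rw [hsplit, norm_mul]
  calc ‖c‖ * ‖⟪φi, (ι₁ S) φj⟫_ℂ‖ ≤ (1 / 2) * (2 * Real.sqrt (δ * (1 - δ))) :=
        mul_le_mul hchalf hmbound (norm_nonneg _) (by norm_num)
    _ = Real.sqrt (δ * (1 - δ)) := by ring
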